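/- Let k be a field, n ≥ 2 an integer, ζ ∈ k a primitive n-th root of unity, r an integer such that ζ^r is again a primitive n-th root of unity, and x ∈ k. Let l be the least positive integer such that n divides l·r. Then the elements e₀^l, e₁^l, e₂^l of the Jackson algebra 𝒥_x(r) are central, i.e. the commutative subalgebra k[e₀^l, e₁^l, e₂^l] is contained in the centre of 𝒥_x(r). -/
import Mathlib


/-- The defining relations of the Jackson algebra `𝒥_x(r)` over `k`:
generators `e₀, e₁, e₂` and relations `e₀e₁ = ζ^r e₁e₀`, `e₂e₀ = ζ^r e₀e₂`,
`e₂e₁ = ζ^{2r} e₁e₂ + x e₀ + x (1 − ζ^{2r})`. -/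
inductive JacksonRel (k : Type*) [Field k] (ζ : k) (r : ℤ) (x : k) :
    FreeAlgebra k (Fin 3) → FreeAlgebra k (Fin 3) → Prop
  | r01 : JacksonRel k ζ r x (FreeAlgebra.ι k 0 * FreeAlgebra.ι k 1)
      (ζ ^ r • (FreeAlgebra.ι k 1 * FreeAlgebra.ι k 0))
  | r20 : JacksonRel k ζ r x (FreeAlgebra.ι k 2 * FreeAlgebra.ι k 0)
      (ζ ^ r • (FreeAlgebra.ι k 0 * FreeAlgebra.ι k 2))
  | r21 : JacksonRel k ζ r x (FreeAlgebra.ι k 2 * FreeAlgebra.ι k 1)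
      (ζ ^ (2 * r) • (FreeAlgebra.ι k 1 * FreeAlgebra.ι k 2) + x • FreeAlgebra.ι k 0 +
        (x * (1 - ζ ^ (2 * r))) • (1 : FreeAlgebra k (Fin 3)))

/-- The Jackson algebra `𝒥_x(r)` over `k`. -/
abbrev Jackson (k : Type*) [Field k] (ζ : k) (r : ℤ) (x : k) :=
  RingQuot (JacksonRel k ζ r x)

/-- The generators `e₀, e₁, e₂` of the Jackson algebra. -/
noncomputable def JacksonGen (k : Type*) [Field k] (ζ : k) (r : ℤ) (x : k) (i : Fin 3) :
    Jackson k ζ r x :=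
  RingQuot.mkAlgHom k (JacksonRel k ζ r x) (FreeAlgebra.ι k i)

/-- Let `k` be a field, `n ≥ 2`, `ζ ∈ k` a primitive `n`-th root of
unity, `r` an integer such that `ζ^r` is again a primitive `n`-th root of unity,
and `x ∈ k`.  Let `l` be the least positive integer such that `n ∣ l·r`.  Then the
elements `e₀^l, e₁^l, e₂^l` of `𝒥_x(r)` are central: the subalgebra
`k[e₀^l, e₁^l, e₂^l]` is contained in the centre of `𝒥_x(r)`. -/
theorem jackson_powers_central (k : Type*) [Field k] (n : ℕ) (hn : 2 ≤ n)
    (ζ : k) (hζ : IsPrimitiveRoot ζ n) (r : ℤ) (hr : IsPrimitiveRoot (ζ ^ r) n)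
    (x : k) (l : ℕ) (hl : 0 < l) (hdvd : (n : ℤ) ∣ (l : ℤ) * r)
    (hleast : ∀ m : ℕ, 0 < m → (n : ℤ) ∣ (m : ℤ) * r → l ≤ m) :
    Algebra.adjoin k
        {JacksonGen k ζ r x 0 ^ l, JacksonGen k ζ r x 1 ^ l, JacksonGen k ζ r x 2 ^ l} ≤
      Subalgebra.center k (Jackson k ζ r x) := by
  -- notation
  set u : k := ζ ^ r with hu_def
  set q : k := ζ ^ (2 * r) with hq_def
  set c : k := x * (1 - q) with hc_def
  set a0 := JacksonGen k ζ r x 0 with ha0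
  set a1 := JacksonGen k ζ r x 1 with ha1
  set a2 := JacksonGen k ζ r x 2 with ha2
  set G : ℕ → k := fun m => ∑ i ∈ Finset.range m, u ^ i with hG_def
  set Q : ℕ → k := fun m => ∑ i ∈ Finset.range m, q ^ i with hQ_def
  -- l = n
  have hl_eq : l = n := by
    have h1 : u ^ l = 1 := by
      obtain ⟨d, hd⟩ := hdvd
      have h2 : u ^ (l : ℕ) = ζ ^ ((l : ℤ) * r) := by
        rw [hu_def, ← zpow_natCast (ζ ^ r) l, ← zpow_mul, mul_comm]
      rw [h2, hd, zpow_mul, zpow_natCast, hζ.pow_eq_one, one_zpow]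
    have h2 : n ∣ l := hr.dvd_of_pow_eq_one l h1
    have h3 : n ≤ l := Nat.le_of_dvd hl h2
    have h4 : l ≤ n := hleast n (by omega) ⟨r, by ring⟩
    omega
  rw [hl_eq]
  -- scalar facts
  have hq_u : q = u * u := by
    rw [hq_def, hu_def, two_mul, zpow_add₀ (hζ.ne_zero (by omega))]
  have hun : u ^ n = 1 := hr.pow_eq_one
  have hqn : q ^ n = 1 := by rw [hq_u, mul_pow, hun, one_mul]
  have hu1 : u ≠ 1 := hr.ne_one (by omega)
  have hGn : G n = 0 := by
    have h := geom_sum_mul u n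
    rw [hun, sub_self] at h
    exact (mul_eq_zero.mp h).resolve_right (sub_ne_zero.mpr hu1)
  have hcQn : c * Q n = 0 := by
    have h : (1 - q) * Q n = 0 := by
      have h : Q n * (q - 1) = 0 := by
        have h2 := geom_sum_mul q n
        rw [hqn, sub_self] at h2
        exact h2
      linear_combination -h
    rw [hc_def, mul_assoc, h, mul_zero]
  have hGsucc : ∀ m : ℕ, G (m + 1) = G m + u ^ m := fun m => Finset.sum_range_succ _ m
  have hQsucc : ∀ m : ℕ, Q (m + 1) = Q m + q ^ m := fun m => Finset.sum_range_succ _ m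
  -- relations in the quotient
  have h01 : a0 * a1 = u • (a1 * a0) := by
    have h := RingQuot.mkAlgHom_rel k (JacksonRel.r01 (k := k) (ζ := ζ) (r := r) (x := x))
    simpa [JacksonGen, map_mul, ha0, ha1] using h
  have h20 : a2 * a0 = u • (a0 * a2) := by
    have h := RingQuot.mkAlgHom_rel k (JacksonRel.r20 (k := k) (ζ := ζ) (r := r) (x := x))
    simpa [JacksonGen, map_mul, ha0, ha2] using h
  have h21 : a2 * a1 = q • (a1 * a2) + x • a0 + c • (1 : Jackson k ζ r x) := by
    have h := RingQuot.mkAlgHom_rel k (JacksonRel.r21 (k := k) (ζ := ζ) (r := r) (x := x))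
    simpa [JacksonGen, map_mul, map_add, map_one, ha0, ha1, ha2] using h
  -- `z`-versions of the relations
  have h01R : ∀ z, a0 * (a1 * z) = u • (a1 * (a0 * z)) := by
    intro z
    calc a0 * (a1 * z) = (a0 * a1) * z := by rw [mul_assoc]
      _ = u • (a1 * (a0 * z)) := by rw [h01, smul_mul_assoc, mul_assoc]
  have h20R : ∀ z, a2 * (a0 * z) = u • (a0 * (a2 * z)) := by
    intro z
    calc a2 * (a0 * z) = (a2 * a0) * z := by rw [mul_assoc]
      _ = u • (a0 * (a2 * z)) := by rw [h20, smul_mul_assoc, mul_assoc]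
  have h21R : ∀ z, a2 * (a1 * z) = q • (a1 * (a2 * z)) + x • (a0 * z) + c • z := by
    intro z
    calc a2 * (a1 * z) = (a2 * a1) * z := by rw [mul_assoc]
      _ = q • (a1 * (a2 * z)) + x • (a0 * z) + c • z := by
          rw [h21, add_mul, add_mul, smul_mul_assoc, smul_mul_assoc, smul_mul_assoc,
            one_mul, mul_assoc]
  -- commutation of powers with generators
  have comm01 : ∀ m : ℕ, a0 ^ m * a1 = u ^ m • (a1 * a0 ^ m) := by
    intro m
    induction m with
    | zero => simp
    | succ m ih =>
      calc a0 ^ (m+1) * a1 = a0 * (a0 ^ m * a1) := by rw [pow_succ', mul_assoc]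
        _ = u ^ m • (a0 * a1 * a0 ^ m) := by rw [ih, mul_smul_comm, mul_assoc]
        _ = u ^ m • ((u • (a1 * a0)) * a0 ^ m) := by rw [h01]
        _ = u ^ (m+1) • (a1 * a0 ^ (m+1)) := by
            rw [smul_mul_assoc, smul_smul, mul_assoc, ← pow_succ', ← pow_succ]
  have comm20 : ∀ m : ℕ, a2 * a0 ^ m = u ^ m • (a0 ^ m * a2) := by
    intro m
    induction m with
    | zero => simp
    | succ m ih =>
      calc a2 * a0 ^ (m+1) = (a2 * a0 ^ m) * a0 := by rw [pow_succ, ← mul_assoc]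
        _ = u ^ m • (a0 ^ m * (a2 * a0)) := by rw [ih, smul_mul_assoc, mul_assoc]
        _ = u ^ m • (a0 ^ m * (u • (a0 * a2))) := by rw [h20]
        _ = u ^ (m+1) • (a0 ^ (m+1) * a2) := by
            rw [mul_smul_comm, smul_smul, ← mul_assoc, ← pow_succ, ← pow_succ]
  have comm10 : ∀ m : ℕ, a0 * a1 ^ m = u ^ m • (a1 ^ m * a0) := by
    intro m
    induction m with
    | zero => simp
    | succ m ih =>
      calc a0 * a1 ^ (m+1) = (a0 * a1 ^ m) * a1 := by rw [pow_succ, ← mul_assoc]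
        _ = u ^ m • (a1 ^ m * (a0 * a1)) := by rw [ih, smul_mul_assoc, mul_assoc]
        _ = u ^ m • (a1 ^ m * (u • (a1 * a0))) := by rw [h01]
        _ = u ^ (m+1) • (a1 ^ (m+1) * a0) := by
            rw [mul_smul_comm, smul_smul, ← mul_assoc, ← pow_succ, ← pow_succ]
  have comm02 : ∀ m : ℕ, a2 ^ m * a0 = u ^ m • (a0 * a2 ^ m) := by
    intro m
    induction m with
    | zero => simp
    | succ m ih =>
      calc a2 ^ (m+1) * a0 = a2 * (a2 ^ m * a0) := by rw [pow_succ', mul_assoc]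
        _ = u ^ m • (a2 * (a0 * a2 ^ m)) := by rw [ih, mul_smul_comm]
        _ = u ^ m • (u • (a0 * (a2 * a2 ^ m))) := by rw [h20R]
        _ = u ^ (m+1) • (a0 * a2 ^ (m+1)) := by
            rw [smul_smul, ← pow_succ', ← pow_succ]
  -- the inhomogeneous commutations
  have P2 : ∀ m : ℕ, a2 ^ (m+1) * a1 =
      q ^ (m+1) • (a1 * a2 ^ (m+1)) + (x * (u ^ m * G (m+1))) • (a0 * a2 ^ m) +
      (c * Q (m+1)) • a2 ^ m := by
    intro m
    induction m with
    | zero =>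
      simpa [hGsucc, hQsucc, hG_def, hQ_def] using h21
    | succ m ih =>
      have key : a2 ^ (m+2) * a1 = a2 * (a2 ^ (m+1) * a1) := by
        rw [pow_succ', mul_assoc]
      rw [key, ih]
      rw [mul_add, mul_add, mul_smul_comm, mul_smul_comm, mul_smul_comm]
      rw [h21R, h20R]
      simp only [smul_add, smul_smul, ← pow_succ']
      rw [hGsucc (m+1), hQsucc (m+1), hGsucc m, hQsucc m]
      match_scalars
      · ring
      · rw [hq_u]; ring
      · ring
  have P2' : ∀ m : ℕ, a2 * a1 ^ (m+1) =
      q ^ (m+1) • (a1 ^ (m+1) * a2) + (x * (u ^ m * G (m+1))) • (a1 ^ m * a0) +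
      (c * Q (m+1)) • a1 ^ m := by
    intro m
    induction m with
    | zero =>
      simpa [hGsucc, hQsucc, hG_def, hQ_def] using h21
    | succ m ih =>
      have key : a2 * a1 ^ (m+2) = (a2 * a1 ^ (m+1)) * a1 := by
        rw [pow_succ, ← mul_assoc]
      rw [key, ih]
      rw [add_mul, add_mul, smul_mul_assoc, smul_mul_assoc, smul_mul_assoc]
      rw [mul_assoc (a1 ^ (m+1)) a2 a1, h21, mul_assoc (a1 ^ m) a0 a1, h01]
      simp only [mul_add, mul_smul_comm, smul_add, smul_smul, mul_one]
      rw [← mul_assoc (a1 ^ (m+1)) a1 a2, ← pow_succ (a1) (m+1),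
        ← mul_assoc (a1 ^ m) a1 a0, ← pow_succ a1 m]
      rw [hGsucc (m+1), hQsucc (m+1), hGsucc m, hQsucc m]
      match_scalars
      · ring
      · rw [hq_u]; ring
      · ring
  -- the three powers commute with each generator
  have hq_npow : q ^ n = 1 := hqn
  have hfact : ∃ m : ℕ, n = m + 1 := ⟨n - 1, by omega⟩
  obtain ⟨m, hm⟩ := hfact
  have hGn' : G (m+1) = 0 := by rw [← hm]; exact hGn
  have hcQn' : c * Q (m+1) = 0 := by rw [← hm]; exact hcQn
  have c0_1 : a0 ^ n * a1 = a1 * a0 ^ n := by rw [comm01 n, hun, one_smul]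
  have c0_2 : a2 * a0 ^ n = a0 ^ n * a2 := by rw [comm20 n, hun, one_smul]
  have c1_0 : a0 * a1 ^ n = a1 ^ n * a0 := by rw [comm10 n, hun, one_smul]
  have c1_2 : a2 * a1 ^ n = a1 ^ n * a2 := by
    rw [hm, P2' m, hGn', hcQn', mul_zero, mul_zero, zero_smul, zero_smul, add_zero,
      add_zero, ← hm, hqn, one_smul]
  have c2_0 : a2 ^ n * a0 = a0 * a2 ^ n := by rw [comm02 n, hun, one_smul]
  have c2_1 : a2 ^ n * a1 = a1 * a2 ^ n := by
    rw [hm, P2 m, hGn', hcQn', mul_zero, mul_zero, zero_smul, zero_smul, add_zero,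
      add_zero, ← hm, hqn, one_smul]
  -- commuting with the generators implies centrality
  have key : ∀ z : Jackson k ζ r x,
      (∀ i : Fin 3, JacksonGen k ζ r x i * z = z * JacksonGen k ζ r x i) →
      z ∈ Subalgebra.center k (Jackson k ζ r x) := by
    intro z hz
    rw [Subalgebra.mem_center_iff]
    intro b
    obtain ⟨w, rfl⟩ := RingQuot.mkAlgHom_surjective k (JacksonRel k ζ r x) b
    induction w using FreeAlgebra.induction with
    | grade0 s => simp [Algebra.commutes]
    | grade1 i => exact hz i
    | mul a b ha hb => rw [map_mul, mul_assoc, hb, ← mul_assoc, ha, mul_assoc]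
    | add a b ha hb => rw [map_add, add_mul, mul_add, ha, hb]
  -- assemble
  apply Algebra.adjoin_le
  rintro z (rfl | rfl | rfl)
  · refine key _ fun i => ?_
    fin_cases i
    · exact ((Commute.refl a0).pow_right n).eq
    · exact c0_1.symm ▸ c0_1 ▸ rfl
    · exact c0_2
  · refine key _ fun i => ?_
    fin_cases i
    · exact c1_0
    · exact ((Commute.refl a1).pow_right n).eq
    · exact c1_2
  · refine key _ fun i => ?_
    fin_cases i
    · exact c2_0.symm
    · exact c2_1.symm
    · exact ((Commute.refl a2).pow_right n).eq
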